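/- Let X be a second countable Hausdorff locally compact abelian group, α a topological automorphism of X, and μ₁, μ₂ probability measures on X. If the pushforward of μ₁ ⊗ μ₂ under (x₁,x₂) ↦ (x₁+x₂, x₁+αx₂) equals its pushforward under (x₁,x₂) ↦ (x₁+x₂, −(x₁+αx₂)), then the random vectors L₁' = (I+α)ξ₁ + 2αξ₂ and L₂' = 2ξ₁ + (I+α)ξ₂ are independent; that is, the pushforward ρ of μ₁ ⊗ μ₂ under (x₁,x₂) ↦ (x₁ + αx₁ + 2αx₂, 2x₁ + x₂ + αx₂) equals the product of its two marginal measures. -/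

import Mathlib

open MeasureTheory

noncomputable section

/-- The symmetry condition: the conditional distribution of `L₂ = ξ₁ + α ξ₂` given
`L₁ = ξ₁ + ξ₂` is symmetric, for independent `ξ₁ ~ μ₁`, `ξ₂ ~ μ₂`. -/
def SymCond {X : Type*} [AddCommGroup X] [TopologicalSpace X] [MeasurableSpace X]
    (μ₁ μ₂ : Measure X) (α : X → X) : Prop :=
  Measure.map (fun p : X × X => (p.1 + p.2, p.1 + α p.2)) (μ₁.prod μ₂) =
    Measure.map (fun p : X × X => (p.1 + p.2, -(p.1 + α p.2))) (μ₁.prod μ₂)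

theorem symmetry_implies_independence_of_forms
    {X : Type*} [AddCommGroup X] [TopologicalSpace X] [IsTopologicalAddGroup X]
    [LocallyCompactSpace X] [SecondCountableTopology X] [T2Space X]
    [MeasurableSpace X] [BorelSpace X]
    (α : X ≃+ X) (hα : Continuous α) (hα' : Continuous α.symm)
    (μ₁ μ₂ : Measure X) [IsProbabilityMeasure μ₁] [IsProbabilityMeasure μ₂]
    (hsym : SymCond μ₁ μ₂ α) :
    Measure.map (fun p : X × X => (p.1 + α p.1 + (α p.2 + α p.2),
        p.1 + p.1 + (p.2 + α p.2))) (μ₁.prod μ₂) =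
      (Measure.map Prod.fst (Measure.map (fun p : X × X => (p.1 + α p.1 + (α p.2 + α p.2),
          p.1 + p.1 + (p.2 + α p.2))) (μ₁.prod μ₂))).prod
        (Measure.map Prod.snd (Measure.map (fun p : X × X => (p.1 + α p.1 + (α p.2 + α p.2),
          p.1 + p.1 + (p.2 + α p.2))) (μ₁.prod μ₂))) := by
  have hαm : Measurable (α : X → X) := hα.measurable
  -- the auxiliary map `G (s, t) = (α s + t, s + t)`
  set G : X × X → X × X := fun q => (α q.1 + q.2, q.1 + q.2) with hGdef
  have hGm : Measurable G :=
    ((hαm.comp measurable_fst).add measurable_snd).prodMk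
      (measurable_fst.add measurable_snd)
  have hTm : Measurable (fun p : X × X => (p.1 + p.2, p.1 + α p.2)) :=
    (measurable_fst.add measurable_snd).prodMk
      (measurable_fst.add (hαm.comp measurable_snd))
  have hTm' : Measurable (fun p : X × X => (p.1 + p.2, -(p.1 + α p.2))) :=
    (measurable_fst.add measurable_snd).prodMk
      (measurable_fst.add (hαm.comp measurable_snd)).neg
  have h1m : Measurable fun x : X => α x - x := hαm.sub measurable_id
  have h2m : Measurable fun y : X => y - α y := measurable_id.sub hαm
  -- the target map is `G ∘ T₊`
  have hcomp : (fun p : X × X => (p.1 + α p.1 + (α p.2 + α p.2),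
      p.1 + p.1 + (p.2 + α p.2))) = G ∘ (fun p : X × X => (p.1 + p.2, p.1 + α p.2)) := by
    funext p
    simp only [hGdef, Function.comp_apply, map_add, Prod.mk.injEq]
    constructor <;> abel
  -- `G ∘ T₋` is a product map
  have hcomp' : G ∘ (fun p : X × X => (p.1 + p.2, -(p.1 + α p.2))) =
      Prod.map (fun x : X => α x - x) (fun y : X => y - α y) := by
    funext ⟨x, y⟩
    simp only [hGdef, Function.comp_apply, map_add, map_neg, Prod.map, Prod.mk.injEq]
    constructor <;> abel
  have key : Measure.map (fun p : X × X => (p.1 + α p.1 + (α p.2 + α p.2),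
      p.1 + p.1 + (p.2 + α p.2))) (μ₁.prod μ₂) =
      (μ₁.map (fun x => α x - x)).prod (μ₂.map (fun y => y - α y)) := by
    rw [hcomp, ← Measure.map_map hGm hTm, hsym, Measure.map_map hGm hTm', hcomp',
      ← Measure.map_prod_map _ _ h1m h2m]
  have hp1 : IsProbabilityMeasure (μ₁.map (fun x => α x - x)) :=
    Measure.isProbabilityMeasure_map h1m.aemeasurable
  have hp2 : IsProbabilityMeasure (μ₂.map (fun y => y - α y)) :=
    Measure.isProbabilityMeasure_map h2m.aemeasurable
  rw [key, Measure.map_fst_prod, Measure.map_snd_prod]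
  simp [measure_univ]

end
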